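/- For α > 0, the function g(y) = α^y (1+y)^{1+y} / ((2-y)^{2-y} (2y-1)^{2y-1}) on (1/2, 2) attains its maximum at y* = 1/2 + (3/2)√(α/(4+α)), and g(y*) = (α + √(4α + α²))³/(8α). -/

import Mathlib

open Real Set

private noncomputable def Lfun (α : ℝ) : ℝ → ℝ := fun y =>
  y * Real.log α + (1 + y) * Real.log (1 + y) - (2 - y) * Real.log (2 - y)
    - (2 * y - 1) * Real.log (2 * y - 1)

private lemma Lfun_hasDerivAt (α : ℝ) {x : ℝ} (hx1 : 1 / 2 < x) (hx2 : x < 2) :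
    HasDerivAt (Lfun α)
      (Real.log α + Real.log (1 + x) + Real.log (2 - x) - 2 * Real.log (2 * x - 1)) x := by
  have h1 : (0:ℝ) < 1 + x := by linarith
  have h2 : (0:ℝ) < 2 - x := by linarith
  have h3 : (0:ℝ) < 2 * x - 1 := by linarith
  have hA : HasDerivAt (fun y : ℝ => y * Real.log α) (Real.log α) x := by
    simpa using (hasDerivAt_id x).mul_const (Real.log α)
  have hu : HasDerivAt (fun y : ℝ => 1 + y) 1 x := (hasDerivAt_id x).const_add 1
  have hB : HasDerivAt (fun y : ℝ => (1 + y) * Real.log (1 + y))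
      (1 * Real.log (1 + x) + (1 + x) * (1 / (1 + x))) x := hu.mul (hu.log h1.ne')
  have hv : HasDerivAt (fun y : ℝ => 2 - y) (-1) x := (hasDerivAt_id x).const_sub 2
  have hC : HasDerivAt (fun y : ℝ => (2 - y) * Real.log (2 - y))
      ((-1) * Real.log (2 - x) + (2 - x) * (-1 / (2 - x))) x := hv.mul (hv.log h2.ne')
  have hw : HasDerivAt (fun y : ℝ => 2 * y - 1) 2 x := by
    simpa using ((hasDerivAt_id x).const_mul 2).sub_const 1
  have hD : HasDerivAt (fun y : ℝ => (2 * y - 1) * Real.log (2 * y - 1))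
      (2 * Real.log (2 * x - 1) + (2 * x - 1) * (2 / (2 * x - 1))) x := hw.mul (hw.log h3.ne')
  have := ((hA.add hB).sub hC).sub hD
  refine this.congr_deriv ?_
  rw [mul_div_cancel₀ _ h1.ne', mul_div_cancel₀ _ h2.ne', mul_div_cancel₀ _ h3.ne']
  ring

set_option maxHeartbeats 1600000 in
/-- For `α > 0`, the function
`g(y) = α^y (1+y)^{1+y} / ((2-y)^{2-y} (2y-1)^{2y-1})` on `(1/2, 2)` attains
its maximum at `y* = 1/2 + (3/2)√(α/(4+α))`, and
`g(y*) = (α + √(4α + α²))³/(8α)`. -/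
theorem stmt_12 (α : ℝ) (hα : 0 < α) (g : ℝ → ℝ)
    (hg : ∀ y, g y = α ^ y * (1 + y) ^ (1 + y) / ((2 - y) ^ (2 - y) * (2 * y - 1) ^ (2 * y - 1)))
    (ystar : ℝ) (hy : ystar = 1 / 2 + (3 / 2) * Real.sqrt (α / (4 + α))) :
    ystar ∈ Set.Ioo (1 / 2 : ℝ) 2 ∧
    (∀ y ∈ Set.Ioo (1 / 2 : ℝ) 2, g y ≤ g ystar) ∧
    g ystar = (α + Real.sqrt (4 * α + α ^ 2)) ^ 3 / (8 * α) := by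
  have h4α : (0:ℝ) < 4 + α := by linarith
  obtain ⟨s, hs_def⟩ : ∃ s : ℝ, s = Real.sqrt (α / (4 + α)) := ⟨_, rfl⟩
  have hy' : ystar = 1 / 2 + (3 / 2) * s := by rw [hy, hs_def]
  have hs0 : 0 < s := hs_def ▸ Real.sqrt_pos.mpr (by positivity)
  have hs2 : s ^ 2 = α / (4 + α) := hs_def ▸ Real.sq_sqrt (by positivity)
  have hs2' : s ^ 2 * (4 + α) = α := by
    rw [hs2]; field_simp
  have hs1 : s < 1 := by
    rw [hs_def, show (1:ℝ) = Real.sqrt 1 by simp]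
    exact Real.sqrt_lt_sqrt (by positivity) (by rw [div_lt_one h4α]; linarith)
  have hmem : ystar ∈ Set.Ioo (1 / 2 : ℝ) 2 := by
    constructor <;> rw [hy'] <;> nlinarith [hs0, hs1]
  obtain ⟨hys1, hys2⟩ := hmem
  -- g = exp ∘ L on the interval
  have hgL : ∀ x ∈ Ioo (1/2:ℝ) 2, g x = Real.exp (Lfun α x) := by
    intro x hx
    have h1 : (0:ℝ) < 1 + x := by linarith [hx.1]
    have h2 : (0:ℝ) < 2 - x := by linarith [hx.2]
    have h3 : (0:ℝ) < 2 * x - 1 := by linarith [hx.1]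
    rw [hg x, Real.rpow_def_of_pos hα, Real.rpow_def_of_pos h1, Real.rpow_def_of_pos h2,
      Real.rpow_def_of_pos h3, ← Real.exp_add, ← Real.exp_add, ← Real.exp_sub]
    congr 1
    simp only [Lfun]
    ring
  -- sign of the derivative
  have hsq : (4 + α) * (ystar - 1/2)^2 = 9 * α / 4 := by
    rw [hy']; ring_nf; nlinarith [hs2']
  have hφpos : ∀ x ∈ Ioo (1/2:ℝ) 2, x < ystar →
      0 < Real.log α + Real.log (1 + x) + Real.log (2 - x) - 2 * Real.log (2 * x - 1) := by
    intro x hx hlt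
    have h1 : (0:ℝ) < 1 + x := by linarith [hx.1]
    have h2 : (0:ℝ) < 2 - x := by linarith [hx.2]
    have h3 : (0:ℝ) < 2 * x - 1 := by linarith [hx.1]
    have hq : (2 * x - 1)^2 < α * ((1 + x) * (2 - x)) := by
      have hdiff : (ystar - 1/2)^2 - (x - 1/2)^2 = (ystar - x) * (ystar + x - 1) := by ring
      have hp : 0 < (ystar - x) * (ystar + x - 1) :=
        mul_pos (by linarith) (by linarith [hx.1])
      have hlt2 : (4 + α) * (x - 1/2)^2 < 9 * α / 4 := by nlinarith [hsq, hp, hdiff, h4α]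
      have hid : α * ((1 + x) * (2 - x)) - (2 * x - 1)^2
          = 9 * α / 4 - (4 + α) * (x - 1/2)^2 := by ring
      linarith
    have hlog := Real.log_lt_log (by positivity) hq
    rw [Real.log_mul hα.ne' (by positivity), Real.log_mul h1.ne' h2.ne'] at hlog
    rw [Real.log_pow] at hlog
    push_cast at hlog
    linarith
  have hφneg : ∀ x ∈ Ioo (1/2:ℝ) 2, ystar < x →
      Real.log α + Real.log (1 + x) + Real.log (2 - x) - 2 * Real.log (2 * x - 1) < 0 := by
    intro x hx hlt
    have h1 : (0:ℝ) < 1 + x := by linarith [hx.1]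
    have h2 : (0:ℝ) < 2 - x := by linarith [hx.2]
    have h3 : (0:ℝ) < 2 * x - 1 := by linarith [hx.1]
    have hq : α * ((1 + x) * (2 - x)) < (2 * x - 1)^2 := by
      have hdiff : (x - 1/2)^2 - (ystar - 1/2)^2 = (x - ystar) * (x + ystar - 1) := by ring
      have hp : 0 < (x - ystar) * (x + ystar - 1) :=
        mul_pos (by linarith) (by linarith [hys1])
      have hlt2 : 9 * α / 4 < (4 + α) * (x - 1/2)^2 := by nlinarith [hsq, hp, hdiff, h4α]
      have hid : α * ((1 + x) * (2 - x)) - (2 * x - 1)^2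
          = 9 * α / 4 - (4 + α) * (x - 1/2)^2 := by ring
      linarith
    have hprodpos : (0:ℝ) < α * ((1 + x) * (2 - x)) := by positivity
    have hlog := Real.log_lt_log hprodpos hq
    rw [Real.log_mul hα.ne' (by positivity), Real.log_mul h1.ne' h2.ne'] at hlog
    rw [Real.log_pow] at hlog
    push_cast at hlog
    linarith
  -- monotonicity: L y ≤ L ystar for all y in the interval
  have hLmax : ∀ y ∈ Ioo (1/2:ℝ) 2, Lfun α y ≤ Lfun α ystar := by
    intro y hyIoo
    rcases lt_trichotomy y ystar with h | h | h
    · have hmono : StrictMonoOn (Lfun α) (Icc y ystar) := by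
        apply strictMonoOn_of_deriv_pos (convex_Icc _ _)
        · intro x hx
          exact ((Lfun_hasDerivAt α (lt_of_lt_of_le hyIoo.1 hx.1)
            (lt_of_le_of_lt hx.2 hys2)).differentiableAt).continuousAt.continuousWithinAt
        · intro x hx
          rw [interior_Icc] at hx
          have hx1 : 1/2 < x := lt_trans hyIoo.1 hx.1
          have hx2 : x < 2 := lt_trans hx.2 hys2
          rw [(Lfun_hasDerivAt α hx1 hx2).deriv]
          exact hφpos x ⟨hx1, hx2⟩ (hx.2)
      exact le_of_lt (hmono ⟨le_refl y, le_of_lt h⟩ ⟨le_of_lt h, le_refl ystar⟩ h)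
    · rw [h]
    · have hanti : StrictAntiOn (Lfun α) (Icc ystar y) := by
        apply strictAntiOn_of_deriv_neg (convex_Icc _ _)
        · intro x hx
          exact ((Lfun_hasDerivAt α (lt_of_lt_of_le hys1 hx.1)
            (lt_of_le_of_lt hx.2 hyIoo.2)).differentiableAt).continuousAt.continuousWithinAt
        · intro x hx
          rw [interior_Icc] at hx
          have hx1 : 1/2 < x := lt_trans hys1 hx.1
          have hx2 : x < 2 := lt_trans hx.2 hyIoo.2
          rw [(Lfun_hasDerivAt α hx1 hx2).deriv]
          exact hφneg x ⟨hx1, hx2⟩ (hx.1)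
      exact le_of_lt (hanti ⟨le_refl ystar, le_of_lt h⟩ ⟨le_of_lt h, le_refl y⟩ h)
  refine ⟨⟨hys1, hys2⟩, ?_, ?_⟩
  · intro y hyIoo
    rw [hgL y hyIoo, hgL ystar ⟨hys1, hys2⟩]
    exact Real.exp_le_exp.mpr (hLmax y hyIoo)
  -- the value at ystar
  · have h1s : (0:ℝ) < 1 + s := by linarith
    have h2s : (0:ℝ) < 1 - s := by linarith
    have hsqrt : Real.sqrt (4 * α + α ^ 2) = α / s := by
      rw [show 4 * α + α ^ 2 = (α / s)^2 by field_simp; linear_combination hs2',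
        Real.sqrt_sq (by positivity)]
    have hT : (α + Real.sqrt (4 * α + α ^ 2)) ^ 3 / (8 * α)
        = α ^ 2 * (1 + s) ^ 3 / (8 * s ^ 3) := by
      rw [hsqrt]; field_simp; ring
    have hTpos : (0:ℝ) < α ^ 2 * (1 + s) ^ 3 / (8 * s ^ 3) := by positivity
    -- log α in terms of s
    have hlogα : Real.log α = 2 * Real.log 2 + 2 * Real.log s
        - Real.log (1 - s) - Real.log (1 + s) := by
      have hα' : α = 4 * s^2 / ((1 - s) * (1 + s)) := by
        field_simp; nlinarith [hs2']
      rw [hα', Real.log_div (by positivity) (by positivity),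
        Real.log_mul (by positivity) (by positivity),
        Real.log_mul (by positivity) (by positivity),
        show (4:ℝ) = 2^2 by norm_num, Real.log_pow, Real.log_pow]
      push_cast
      ring
    have hlogT : Real.log (α ^ 2 * (1 + s) ^ 3 / (8 * s ^ 3))
        = 2 * Real.log α + 3 * Real.log (1 + s) - 3 * Real.log 2 - 3 * Real.log s := by
      rw [Real.log_div (by positivity) (by positivity),
        Real.log_mul (by positivity) (by positivity),
        Real.log_mul (by positivity) (by positivity),
        show (8:ℝ) = 2^3 by norm_num, Real.log_pow, Real.log_pow, Real.log_pow, Real.log_pow]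
      push_cast
      ring
    have hy1 : 1 + ystar = (3/2) * (1 + s) := by rw [hy']; ring
    have hy2 : 2 - ystar = (3/2) * (1 - s) := by rw [hy']; ring
    have hy3 : 2 * ystar - 1 = 3 * s := by rw [hy']; ring
    have hLval : Lfun α ystar
        = Real.log (α ^ 2 * (1 + s) ^ 3 / (8 * s ^ 3)) := by
      rw [hlogT]
      simp only [Lfun]
      rw [hy1, hy2, hy3, hy',
        Real.log_mul (by norm_num : ((3:ℝ)/2) ≠ 0) h1s.ne',
        Real.log_mul (by norm_num : ((3:ℝ)/2) ≠ 0) h2s.ne',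
        Real.log_mul (by norm_num : (3:ℝ) ≠ 0) hs0.ne',
        Real.log_div (by norm_num) (by norm_num), hlogα]
      ring
    rw [hgL ystar ⟨hys1, hys2⟩, hLval, Real.exp_log hTpos, hT]
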